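/- Let R be an integral domain (not necessarily Noetherian) containing a field of characteristic zero. If each height one prime ideal of the polynomial ring R[X] is a set theoretic complete intersection, then R is normal, i.e., R is integrally closed in its field of fractions. -/

import Mathlib

open Polynomial

/-- The height of an ideal: the infimum of the heights (in the prime spectrum)
of the prime ideals containing it. -/
noncomputable def idealHeight {A : Type*} [CommRing A] (I : Ideal A) : ℕ∞ :=
  ⨅ (P : PrimeSpectrum A) (_ : I ≤ P.asIdeal), Order.height P

/-- An ideal `I` of a commutative ring is a set theoretic complete intersection if there
exist `n` elements, with `n` the height of `I`, such that the radical of `I` equals the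
radical of the ideal they generate. -/
def IsSTCI {A : Type*} [CommRing A] (I : Ideal A) : Prop :=
  ∃ n : ℕ, (n : ℕ∞) = idealHeight I ∧
    ∃ a : Fin n → A, I.radical = (Ideal.span (Set.range a)).radical

section Aux

variable {R : Type*} [CommRing R] [IsDomain R]

/-- denominator clearing -/
lemma aux_denom (v : (FractionRing R)[X]) :
    ∃ (d : R) (V : R[X]), d ≠ 0 ∧
      V.map (algebraMap R (FractionRing R)) = C (algebraMap R (FractionRing R) d) * v := by
  obtain ⟨b, hb⟩ := IsLocalization.integerNormalization_map_to_map (nonZeroDivisors R) v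
  exact ⟨(b : R), IsLocalization.integerNormalization (nonZeroDivisors R) v,
    nonZeroDivisors.coe_ne_zero b, by rw [hb, ← smul_eq_C_mul, algebraMap_smul]⟩

end Aux

/-- If `R` is a domain containing a field of characteristic zero and each height one prime
ideal of `R[X]` is a set theoretic complete intersection, then `R` is normal, i.e.
integrally closed in its field of fractions. -/
theorem stmt_2 (R : Type*) [CommRing R] [IsDomain R]
    (hfield : ∃ K : Subring R, IsField K ∧ CharZero K)
    (hSTCI : ∀ P : Ideal R[X], P.IsPrime → idealHeight P = 1 → IsSTCI P) :
    IsIntegrallyClosed R := by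
  classical
  rw [isIntegrallyClosed_iff (FractionRing R)]
  intro x hx
  by_contra hnx
  push_neg at hnx
  set ι := algebraMap R (FractionRing R) with hιdef
  have hι : Function.Injective ι := IsFractionRing.injective R (FractionRing R)
  have hιX : Function.Injective (Polynomial.map ι) := Polynomial.map_injective ι hι
  set P := RingHom.ker (Polynomial.aeval x : R[X] →ₐ[R] FractionRing R) with hPdef
  have hPp : P.IsPrime := RingHom.ker_isPrime _
  have hmem : ∀ p : R[X], p ∈ P ↔ (p.map ι).eval x = 0 := fun p => by
    rw [hPdef, RingHom.mem_ker, Polynomial.aeval_def, Polynomial.eval_map, hιdef]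
  have hdvd : ∀ p : R[X], p ∈ P → (X - C x) ∣ p.map ι := fun p hp =>
    (dvd_iff_isRoot).mpr ((hmem p).mp hp)
  -- constants in P are zero
  have hC0 : ∀ a : R, C a ∈ P → a = 0 := by
    intro a ha
    rw [hmem] at ha
    simp only [map_C, eval_C] at ha
    exact hι (by simpa using ha)
  -- a monic polynomial in P
  obtain ⟨g, hgmonic, hgev⟩ := hx
  have hgP : g ∈ P := by
    rw [hPdef, RingHom.mem_ker, Polynomial.aeval_def]; exact hgev
  have hPne : P ≠ ⊥ := by
    intro h
    rw [h] at hgP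
    exact hgmonic.ne_zero hgP
  -- the polynomial s X - r with x = r / s
  obtain ⟨⟨r, s⟩, hrs⟩ := IsLocalization.mk'_surjective (nonZeroDivisors R) x
  have hs0 : (s : R) ≠ 0 := nonZeroDivisors.coe_ne_zero s
  have hsx : ι s * x = ι r := by
    rw [← hrs, mul_comm]; exact IsLocalization.mk'_spec _ r s
  set g₁ : R[X] := C (s : R) * X - C r with hg₁def
  have hg₁P : g₁ ∈ P := by
    rw [hmem]
    simp [hg₁def, hsx]
  have hg₁map : g₁.map ι = C (ι s) * (X - C x) := by
    simp [hg₁def, mul_sub, ← C_mul, hsx]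
  -- key: any nonzero prime contained in P equals P
  have hkey : ∀ Q : Ideal R[X], Q.IsPrime → Q ≤ P → Q ≠ ⊥ → P ≤ Q := by
    intro Q hQp hQP hQne
    obtain ⟨q, hqQ, hq0⟩ := Submodule.exists_mem_ne_zero_of_ne_bot hQne
    have hqK0 : q.map ι ≠ 0 := fun h => hq0 (hιX (by simpa using h))
    obtain ⟨w, hw, hwnd⟩ := (q.map ι).exists_eq_pow_rootMultiplicity_mul_and_not_dvd hqK0 x
    set m' := (q.map ι).rootMultiplicity x with hm'def
    have hm'pos : m' ≠ 0 := by
      intro h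
      apply hwnd
      have h2 := hdvd q (hQP hqQ)
      rwa [hw, h, pow_zero, one_mul] at h2
    obtain ⟨d, W, hd0, hW⟩ := aux_denom (R := R) w
    have hιd0 : ι d ≠ 0 := fun h => hd0 (by simpa using hι (by simpa using h))
    have hWQ : ¬ W ∈ Q := by
      intro hWQ
      apply hwnd
      have h2 : (X - C x) ∣ W.map ι := hdvd W (hQP hWQ)
      rw [hW] at h2
      exact (IsUnit.dvd_mul_left (isUnit_C.mpr (isUnit_iff_ne_zero.mpr hιd0))).mp h2
    have hg₁Q : g₁ ∈ Q := by
      have heq : (C (s : R)) ^ m' * (C d * q) = g₁ ^ m' * W := by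
        apply hιX
        rw [← hιdef] at hW
        simp only [Polynomial.map_mul, Polynomial.map_pow, map_C]
        rw [hg₁map, hW, hw, mul_pow]
        ring
      have hmemQ : g₁ ^ m' * W ∈ Q := heq ▸ Ideal.mul_mem_left _ _ (Ideal.mul_mem_left _ _ hqQ)
      rcases hQp.mem_or_mem hmemQ with h | h
      · exact hQp.mem_of_pow_mem _ h
      · exact absurd h hWQ
    intro p hpP
    obtain ⟨v, hv⟩ := hdvd p hpP
    obtain ⟨e, V, he0, hV⟩ := aux_denom (R := R) v
    have heq : C ((e : R) * (s : R)) * p = g₁ * V := by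
      apply hιX
      rw [← hιdef] at hV
      simp only [Polynomial.map_mul, map_C, map_mul]
      rw [hg₁map, hV, hv]
      ring
    have hmemQ : C ((e : R) * (s : R)) * p ∈ Q := heq ▸ Ideal.mul_mem_right _ _ hg₁Q
    rcases hQp.mem_or_mem hmemQ with h | h
    · exact absurd (hC0 _ (hQP h)) (mul_ne_zero he0 hs0)
    · exact h
  -- the height of P is one
  set 𝔭 : PrimeSpectrum R[X] := ⟨P, hPp⟩ with h𝔭def
  have hminy : ∀ y : PrimeSpectrum R[X], y < 𝔭 → Order.height y = 0 := by
    intro y hy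
    have hybot : y.asIdeal = ⊥ := by
      by_contra hne
      have hlt : y.asIdeal < P := (PrimeSpectrum.asIdeal_lt_asIdeal _ _).mpr hy
      exact hlt.not_ge (hkey y.asIdeal y.isPrime hlt.le hne)
    rw [Order.height_eq_zero]
    intro z hz
    have h1 : z.asIdeal ≤ y.asIdeal := (PrimeSpectrum.asIdeal_le_asIdeal _ _).mpr hz
    rw [hybot, le_bot_iff] at h1
    exact (PrimeSpectrum.asIdeal_le_asIdeal _ _).mp (by rw [hybot, h1])
  have hb : (⟨⊥, Ideal.bot_prime⟩ : PrimeSpectrum R[X]) < 𝔭 := by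
    rw [← PrimeSpectrum.asIdeal_lt_asIdeal]
    exact bot_lt_iff_ne_bot.mpr hPne
  have hle1 : Order.height 𝔭 ≤ (1 : ℕ) := by
    rw [Order.height_le_coe_iff]
    intro y hy
    rw [hminy y hy]
    exact_mod_cast zero_lt_one
  have hht : Order.height 𝔭 = 1 := by
    have h01 : (1 : ℕ∞) = ((0 : ℕ) : ℕ∞) + 1 := by norm_num
    rw [h01, Order.height_eq_coe_add_one_iff]
    refine ⟨lt_of_le_of_lt hle1 (ENat.coe_lt_top 1), ⟨_, hb, hminy _ hb⟩,
      fun y hy => le_of_eq (hminy y hy)⟩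
  have hIH : idealHeight P = 1 := by
    unfold idealHeight
    apply le_antisymm
    · exact le_trans (iInf₂_le 𝔭 le_rfl) (le_of_eq hht)
    · refine le_iInf₂ fun Q hQ => ?_
      rw [← hht]
      exact Order.height_mono ((PrimeSpectrum.asIdeal_le_asIdeal 𝔭 Q).mp hQ)
  -- apply the STCI hypothesis
  obtain ⟨n, hn, a, hrad⟩ := hSTCI P hPp hIH
  have hn1 : n = 1 := by
    rw [hIH] at hn
    exact_mod_cast hn
  subst hn1
  set f := a 0 with hfdef
  have hrange : Set.range a = {f} := by
    rw [hfdef]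
    exact Set.range_unique
  have hPf : P = (Ideal.span {f}).radical := by
    rw [← hPp.radical, hrad, hrange]
  have hfP : f ∈ P := hPf ▸ Ideal.le_radical (Ideal.subset_span rfl)
  have hιs0 : ι (s : R) ≠ 0 := fun h => hs0 (hι (by simpa using h))
  -- the leading coefficient of f is a unit
  have hcu : IsUnit f.leadingCoeff := by
    have h1 : g ∈ (Ideal.span {f}).radical := hPf ▸ hgP
    obtain ⟨k2, hk2⟩ := Ideal.mem_radical_iff.mp h1
    obtain ⟨h2, hh2⟩ := Ideal.mem_span_singleton.mp hk2
    have hlc := congrArg leadingCoeff hh2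
    rw [(hgmonic.pow k2).leadingCoeff, leadingCoeff_mul] at hlc
    exact IsUnit.of_mul_eq_one _ hlc.symm
  -- f maps to c₀ (X - x)^m in K[X]
  obtain ⟨k1, h1, hh1⟩ : ∃ (k : ℕ) (h : R[X]), g₁ ^ k = f * h := by
    have h1 : g₁ ∈ (Ideal.span {f}).radical := hPf ▸ hg₁P
    obtain ⟨k, hk⟩ := Ideal.mem_radical_iff.mp h1
    obtain ⟨h, hh⟩ := Ideal.mem_span_singleton.mp hk
    exact ⟨k, h, hh⟩
  have hdvdpow : f.map ι ∣ (X - C x) ^ k1 := by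
    have hd2 : f.map ι ∣ (C (ι (s : R))) ^ k1 * (X - C x) ^ k1 := by
      refine ⟨h1.map ι, ?_⟩
      rw [← mul_pow, ← hg₁map, ← Polynomial.map_pow, hh1, Polynomial.map_mul]
    exact (IsUnit.dvd_mul_left
      (IsUnit.pow k1 (isUnit_C.mpr (isUnit_iff_ne_zero.mpr hιs0)))).mp hd2
  obtain ⟨m, hmk1, hassoc⟩ := (dvd_prime_pow (Polynomial.prime_X_sub_C x) k1).mp hdvdpow
  obtain ⟨u, hu⟩ := hassoc
  obtain ⟨c₀, hc₀u, hc₀⟩ := Polynomial.isUnit_iff.mp (u⁻¹ : (FractionRing R)[X]ˣ).isUnit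
  have hfK : f.map ι = C c₀ * (X - C x) ^ m := by
    have h2 : f.map ι = (X - C x) ^ m * ((u⁻¹ : (FractionRing R)[X]ˣ) : (FractionRing R)[X]) := by
      rw [← hu, Units.mul_inv_cancel_right]
    rw [h2, ← hc₀]; ring
  have hc₀0 : c₀ ≠ 0 := hc₀u.ne_zero
  have hm0 : m ≠ 0 := by
    intro h
    have hev : (f.map ι).eval x = 0 := (hmem f).mp hfP
    rw [hfK, h, pow_zero, mul_one, eval_C] at hev
    exact hc₀0 hev
  have hm1 : 1 ≤ m := Nat.one_le_iff_ne_zero.mpr hm0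
  have hdeg : f.natDegree = m := by
    have h2 := natDegree_map_eq_of_injective hι f
    rw [hfK, natDegree_C_mul hc₀0, natDegree_pow, natDegree_X_sub_C, mul_one] at h2
    exact h2.symm
  -- coefficients of f
  have hco : ∀ j : ℕ, ι (f.coeff j) = c₀ * ((-x) ^ (m - j) * (m.choose j : FractionRing R)) := by
    intro j
    have h2 := congrArg (fun p => Polynomial.coeff p j) hfK
    simp only [coeff_map] at h2
    rw [sub_eq_add_neg, ← C_neg, coeff_C_mul, coeff_X_add_C_pow] at h2
    exact h2
  have hc₀lead : c₀ = ι f.leadingCoeff := by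
    have h2 := hco m
    rw [Nat.sub_self, pow_zero, Nat.choose_self, Nat.cast_one, one_mul, mul_one] at h2
    rw [leadingCoeff, hdeg]
    exact h2.symm
  have hkeyco : ι (f.coeff (m - 1)) = -(x * ι f.leadingCoeff * (m : FractionRing R)) := by
    have h2 := hco (m - 1)
    rw [show m - (m - 1) = 1 from by omega,
      show m.choose (m - 1) = m from by rw [Nat.choose_symm hm1, Nat.choose_one_right],
      pow_one] at h2
    rw [h2, hc₀lead]; ring
  -- m is invertible in R
  obtain ⟨K₀, hK₀f, hK₀c⟩ := hfield
  obtain ⟨binv, hbinv⟩ : ∃ b : R, (m : R) * b = 1 := by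
    have hm0' : ((m : ℕ) : K₀) ≠ 0 := Nat.cast_ne_zero.mpr hm0
    obtain ⟨b, hb⟩ := hK₀f.mul_inv_cancel hm0'
    refine ⟨(b : R), ?_⟩
    have h2 := congrArg (K₀.subtype) hb
    simpa using h2
  obtain ⟨cinv, hcinv⟩ := hcu.exists_right_inv
  apply hnx (-(f.coeff (m - 1) * cinv * binv))
  have hone1 : ι f.leadingCoeff * ι cinv = 1 := by rw [← map_mul, hcinv, map_one]
  have hone2 : (m : FractionRing R) * ι binv = 1 := by
    rw [← map_natCast ι m, ← map_mul, hbinv, map_one]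
  calc ι (-(f.coeff (m - 1) * cinv * binv))
      = x * (ι f.leadingCoeff * ι cinv) * ((m : FractionRing R) * ι binv) := by
        rw [map_neg, map_mul, map_mul, hkeyco]; ring
    _ = x := by rw [hone1, hone2, mul_one, mul_one]
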